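/- Let $a > 0$ be a real number. For each $n \ge 1$ and $1 \le i \le n$, let $t_i = \frac{i}{n} - \frac{1}{2n}$ and define $D_i^{(a)} = i \binom{n}{i} \int_0^1 |x - t_i|^a \, x^{i-1} (1-x)^{n-i} \, dx$. Then $\sum_{i=1}^{n} D_i^{(a)} = O\left(\frac{1}{n^{a/2 - 1}}\right)$; that is, there exist a constant $C > 0$ and $N$ such that for all $n \ge N$, $\sum_{i=1}^{n} D_i^{(a)} \le C \, n^{1 - a/2}$. -/

import Mathlib

set_option maxHeartbeats 2000000

open intervalIntegral



/-- IBP: derivative of `(x-t)^(q+1) * x^(j+1) * (1-x)^(r+1)` integrates to zero. -/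
lemma ibp_main (j r q : ℕ) (t : ℝ) :
    ∫ x in (0:ℝ)..1, (((q:ℝ)+1)*(x-t)^q * (x^(j+1)*(1-x)^(r+1))
      + (x-t)^(q+1) * ((((j:ℝ)+1) - ((j:ℝ)+(r:ℝ)+2)*x) * (x^j*(1-x)^r))) = 0 := by
  have hder : ∀ x ∈ Set.uIcc (0:ℝ) 1,
      HasDerivAt (fun x : ℝ => (x-t)^(q+1) * (x^(j+1)*(1-x)^(r+1)))
        (((q:ℝ)+1)*(x-t)^q * (x^(j+1)*(1-x)^(r+1))
          + (x-t)^(q+1) * ((((j:ℝ)+1) - ((j:ℝ)+(r:ℝ)+2)*x) * (x^j*(1-x)^r))) x := by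
    intro x _
    have h1 : HasDerivAt (fun x : ℝ => (x - t)^(q+1)) (((q:ℝ)+1)*(x-t)^q) x := by
      simpa using ((hasDerivAt_id x).sub_const t).fun_pow (q+1)
    have h2 : HasDerivAt (fun x : ℝ => x^(j+1)) (((j:ℝ)+1)*x^j) x := by
      simpa using hasDerivAt_pow (j+1) x
    have h3 : HasDerivAt (fun x : ℝ => (1-x)^(r+1)) (-(((r:ℝ)+1)*(1-x)^r)) x := by
      have := ((hasDerivAt_const x (1:ℝ)).sub (hasDerivAt_id x)).fun_pow (r+1)
      simpa using this
    have := h1.fun_mul (h2.fun_mul h3)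
    refine this.congr_deriv ?_
    ring
  have hcont : Continuous (fun x : ℝ => (((q:ℝ)+1)*(x-t)^q * (x^(j+1)*(1-x)^(r+1))
      + (x-t)^(q+1) * ((((j:ℝ)+1) - ((j:ℝ)+(r:ℝ)+2)*x) * (x^j*(1-x)^r)))) := by
    continuity
  rw [integral_eq_sub_of_hasDerivAt hder (hcont.intervalIntegrable 0 1)]
  simp


lemma ibp_beta (j r : ℕ) :
    ∫ x in (0:ℝ)..1, (((j:ℝ)+1)*x^j*(1-x)^(r+1) - ((r:ℝ)+1)*x^(j+1)*(1-x)^r) = 0 := by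
  have hder : ∀ x ∈ Set.uIcc (0:ℝ) 1,
      HasDerivAt (fun x : ℝ => x^(j+1)*(1-x)^(r+1))
        (((j:ℝ)+1)*x^j*(1-x)^(r+1) - ((r:ℝ)+1)*x^(j+1)*(1-x)^r) x := by
    intro x _
    have h2 : HasDerivAt (fun x : ℝ => x^(j+1)) (((j:ℝ)+1)*x^j) x := by
      simpa using hasDerivAt_pow (j+1) x
    have h3 : HasDerivAt (fun x : ℝ => (1-x)^(r+1)) (-(((r:ℝ)+1)*(1-x)^r)) x := by
      simpa using ((hasDerivAt_const x (1:ℝ)).sub (hasDerivAt_id x)).fun_pow (r+1)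
    have := h2.fun_mul h3
    refine this.congr_deriv ?_
    ring
  have hcont : Continuous (fun x : ℝ =>
      ((j:ℝ)+1)*x^j*(1-x)^(r+1) - ((r:ℝ)+1)*x^(j+1)*(1-x)^r) := by continuity
  rw [integral_eq_sub_of_hasDerivAt hder (hcont.intervalIntegrable 0 1)]
  simp

lemma beta_base (r : ℕ) : ∫ x in (0:ℝ)..1, (1-x)^r = 1/((r:ℝ)+1) := by
  have hder : ∀ x ∈ Set.uIcc (0:ℝ) 1,
      HasDerivAt (fun x : ℝ => -((1-x)^(r+1)/((r:ℝ)+1))) ((1-x)^r) x := by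
    intro x _
    have h3 : HasDerivAt (fun x : ℝ => (1-x)^(r+1)) (-(((r:ℝ)+1)*(1-x)^r)) x := by
      simpa using ((hasDerivAt_const x (1:ℝ)).sub (hasDerivAt_id x)).fun_pow (r+1)
    have := (h3.div_const ((r:ℝ)+1)).neg
    refine this.congr_deriv ?_
    have hr : ((r:ℝ)+1) ≠ 0 := by positivity
    field_simp
  have hcont : Continuous (fun x : ℝ => (1-x)^r) := by continuity
  rw [integral_eq_sub_of_hasDerivAt hder (hcont.intervalIntegrable 0 1)]
  have hr : ((r:ℝ)+1) ≠ 0 := by positivity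
  field_simp
  simp

lemma beta_val (j r : ℕ) :
    ∫ x in (0:ℝ)..1, x^j*(1-x)^r
      = (j.factorial * r.factorial : ℝ) / ((j+r+1).factorial) := by
  induction j generalizing r with
  | zero =>
      have h := beta_base r
      have hfac : (r.factorial : ℝ) ≠ 0 := by positivity
      have e2 : ((r+1).factorial : ℝ) = ((r:ℝ)+1) * r.factorial := by
        rw [Nat.factorial_succ]; push_cast; ring
      simp only [pow_zero, one_mul, Nat.zero_add, h, Nat.factorial_zero,
        Nat.cast_one, e2]
      field_simp
  | succ j ih =>
      have key := ibp_beta j r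
      have hc1 : Continuous (fun x : ℝ => ((j:ℝ)+1)*(x^j*(1-x)^(r+1))) := by continuity
      have hc2 : Continuous (fun x : ℝ => ((r:ℝ)+1)*(x^(j+1)*(1-x)^r)) := by continuity
      have hsplit : ∫ x in (0:ℝ)..1, (((j:ℝ)+1)*x^j*(1-x)^(r+1) - ((r:ℝ)+1)*x^(j+1)*(1-x)^r)
          = (((j:ℝ)+1) * ∫ x in (0:ℝ)..1, x^j*(1-x)^(r+1))
            - (((r:ℝ)+1) * ∫ x in (0:ℝ)..1, x^(j+1)*(1-x)^r) := by
        rw [← intervalIntegral.integral_const_mul, ← intervalIntegral.integral_const_mul,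
          ← integral_sub (hc1.intervalIntegrable 0 1) (hc2.intervalIntegrable 0 1)]
        congr 1; ext x; ring
      rw [hsplit] at key
      have hval : (((r:ℝ)+1) * ∫ x in (0:ℝ)..1, x^(j+1)*(1-x)^r)
          = ((j:ℝ)+1) * ((j.factorial * (r+1).factorial : ℝ) / ((j+(r+1)+1).factorial)) := by
        rw [← ih (r+1)]; linarith
      have hr : ((r:ℝ)+1) ≠ 0 := by positivity
      have : (∫ x in (0:ℝ)..1, x^(j+1)*(1-x)^r)
          = ((j:ℝ)+1) * ((j.factorial * (r+1).factorial : ℝ) / ((j+(r+1)+1).factorial)) / ((r:ℝ)+1) := by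
        field_simp at hval ⊢; linarith
      rw [this]
      have e1 : ((j+1).factorial : ℝ) = ((j:ℝ)+1) * j.factorial := by
        rw [Nat.factorial_succ]; push_cast; ring
      have e2 : ((r+1).factorial : ℝ) = ((r:ℝ)+1) * r.factorial := by
        rw [Nat.factorial_succ]; push_cast; ring
      have e3 : (j+(r+1)+1) = (j+1)+r+1 := by ring
      rw [e3] at *
      rw [e1, e2]
      have hfac : (((j+1)+r+1).factorial : ℝ) ≠ 0 := by positivity
      field_simp


lemma moment_bound (j r : ℕ) (t : ℝ)
    (hd : |((j:ℝ)+1) - ((j:ℝ)+(r:ℝ)+2)*t| ≤ 1) (m : ℕ) :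
    (((j+r+1).factorial : ℝ) / (j.factorial * r.factorial)) *
      ∫ x in (0:ℝ)..1, (x-t)^(2*m) * (x^j*(1-x)^r)
      ≤ (m.factorial : ℝ) / ((j:ℝ)+(r:ℝ)+1)^m := by
  set N : ℝ := (j:ℝ)+(r:ℝ)+1 with hN
  have hN1 : (1:ℝ) ≤ N := by
    have h1 : (0:ℝ) ≤ (j:ℝ) := Nat.cast_nonneg j
    have h2 : (0:ℝ) ≤ (r:ℝ) := Nat.cast_nonneg r
    simp only [hN]; linarith
  have hN0 : (0:ℝ) < N := by linarith
  set c : ℝ := ((j+r+1).factorial : ℝ) / (j.factorial * r.factorial) with hc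
  have hc0 : 0 < c := by positivity
  set g : ℝ → ℝ := fun x => x^j*(1-x)^r with hg
  have hgc : Continuous g := by unfold g; continuity
  have hgnn : ∀ x ∈ Set.Icc (0:ℝ) 1, 0 ≤ g x := by
    intro x hx
    have := hx.1; have := hx.2
    have h0 := hx.1
    have h1 := hx.2
    show 0 ≤ x^j*(1-x)^r
    have : (0:ℝ) ≤ 1 - x := by linarith
    positivity
  -- nonnegativity of even moments
  have hJnn : ∀ p : ℕ, 0 ≤ ∫ x in (0:ℝ)..1, (x-t)^(2*p) * g x := by
    intro p
    apply intervalIntegral.integral_nonneg (by norm_num)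
    intro x hx
    exact mul_nonneg (even_two_mul p |>.pow_nonneg _) (hgnn x hx)
  -- continuity of moment integrands
  have hJc : ∀ p : ℕ, Continuous (fun x : ℝ => (x-t)^p * g x) := by
    intro p; unfold g; continuity
  induction m with
  | zero =>
      simp only [Nat.mul_zero, pow_zero, one_mul, Nat.factorial_zero, Nat.cast_one]
      show c * ∫ x in (0:ℝ)..1, x^j*(1-x)^r ≤ 1/1
      rw [beta_val j r]
      have h1 : ((j+r+1).factorial : ℝ) ≠ 0 := by positivity
      have h2 : (j.factorial : ℝ) ≠ 0 := by positivity
      have h3 : (r.factorial : ℝ) ≠ 0 := by positivity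
      have heq : c * ((j.factorial * r.factorial : ℝ) / ((j+r+1).factorial)) = 1 := by
        rw [hc]; field_simp
      rw [heq]; norm_num
  | succ m ih =>
      set d : ℝ := ((j:ℝ)+1) - ((j:ℝ)+(r:ℝ)+2)*t with hdd
      set J0 : ℝ := ∫ x in (0:ℝ)..1, (x-t)^(2*m) * g x with hJ0
      set J1 : ℝ := ∫ x in (0:ℝ)..1, (x-t)^(2*m+1) * g x with hJ1
      set J2 : ℝ := ∫ x in (0:ℝ)..1, (x-t)^(2*m+2) * g x with hJ2
      set K : ℝ := ∫ x in (0:ℝ)..1, (x-t)^(2*m) * (x^(j+1)*(1-x)^(r+1)) with hK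
      have hKc : Continuous (fun x : ℝ => (x-t)^(2*m) * (x^(j+1)*(1-x)^(r+1))) := by
        continuity
      -- the IBP identity
      have key2 : ((2*m:ℝ)+1)*K + (d*J1 - (N+1)*J2) = 0 := by
        have h := ibp_main j r (2*m) t
        rw [← h, hK, hJ1, hJ2]
        rw [← intervalIntegral.integral_const_mul, ← intervalIntegral.integral_const_mul, ← intervalIntegral.integral_const_mul,
          ← integral_sub ((continuous_const.fun_mul (hJc (2*m+1))).intervalIntegrable 0 1)
            ((continuous_const.fun_mul (hJc (2*m+2))).intervalIntegrable 0 1),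
          ← integral_add ((continuous_const.fun_mul hKc).intervalIntegrable 0 1)
            (((continuous_const.fun_mul (hJc (2*m+1))).fun_sub
              (continuous_const.fun_mul (hJc (2*m+2)))).intervalIntegrable 0 1)]
        apply integral_congr
        intro x _
        simp only [hg, hdd, hN]
        push_cast
        ring
      -- K ≤ (1/4) J0
      have hKb : K ≤ (1/4) * J0 := by
        rw [hK, hJ0, ← intervalIntegral.integral_const_mul]
        apply intervalIntegral.integral_mono_on (by norm_num)
          (hKc.intervalIntegrable 0 1)
          ((continuous_const.fun_mul (hJc (2*m))).intervalIntegrable 0 1)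
        intro x hx
        have h0 := hx.1
        have h1 := hx.2
        have hx4 : x*(1-x) ≤ 1/4 := by nlinarith [sq_nonneg (1-2*x)]
        have hx0 : 0 ≤ x*(1-x) := by nlinarith
        have hpn : (0:ℝ) ≤ (x-t)^(2*m) := (even_two_mul m).pow_nonneg _
        have e : (x-t)^(2*m) * (x^(j+1)*(1-x)^(r+1))
            = ((x-t)^(2*m) * g x) * (x*(1-x)) := by
          show _ = ((x-t)^(2*m) * (x^j*(1-x)^r)) * (x*(1-x)); ring
        rw [e]
        have hgn : 0 ≤ g x := hgnn x hx
        calc ((x-t)^(2*m) * g x) * (x*(1-x)) ≤ ((x-t)^(2*m) * g x) * (1/4) :=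
              mul_le_mul_of_nonneg_left hx4 (mul_nonneg hpn hgn)
          _ = 1/4 * ((x-t)^(2*m) * g x) := by ring
      -- |J1| ≤ (J0 + J2)/2
      have habs : ∀ (u:ℝ) (p:ℕ), |u|^(2*p) = u^(2*p) := by
        intro u p; rw [pow_mul, sq_abs, ← pow_mul]
      have hJ1b : |J1| ≤ (1/2)*J0 + (1/2)*J2 := by
        have h1 : |J1| ≤ ∫ x in (0:ℝ)..1, |(x-t)^(2*m+1) * g x| :=
          intervalIntegral.abs_integral_le_integral_abs (by norm_num)
        have h2 : (∫ x in (0:ℝ)..1, |(x-t)^(2*m+1) * g x|)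
            ≤ ∫ x in (0:ℝ)..1, ((1/2)*((x-t)^(2*m) * g x) + (1/2)*((x-t)^(2*m+2) * g x)) := by
          apply intervalIntegral.integral_mono_on (by norm_num)
            ((hJc (2*m+1)).abs.intervalIntegrable 0 1)
            (((continuous_const.fun_mul (hJc (2*m))).fun_add (continuous_const.fun_mul (hJc (2*m+2)))).intervalIntegrable 0 1)
          intro x hx
          have hgn : 0 ≤ g x := hgnn x hx
          have key : 2 * |x-t|^m * |x-t|^(m+1) ≤ (|x-t|^m)^2 + (|x-t|^(m+1))^2 :=
            two_mul_le_add_sq _ _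
          have e1 : |x-t|^m * |x-t|^(m+1) = |x-t|^(2*m+1) := by
            rw [← pow_add]; congr 1; ring
          have e2 : (|x-t|^m)^2 = (x-t)^(2*m) := by
            rw [← pow_mul, mul_comm m 2, habs]
          have e3 : (|x-t|^(m+1))^2 = (x-t)^(2*m+2) := by
            rw [← pow_mul, mul_comm (m+1) 2, habs]
            congr 1
          rw [e2, e3] at key
          have key2 : 2 * |x-t|^(2*m+1) ≤ (x-t)^(2*m) + (x-t)^(2*m+2) := by
            rw [← e1]; linarith
          have e4 : |(x-t)^(2*m+1) * g x| = |x-t|^(2*m+1) * g x := by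
            rw [abs_mul, abs_pow, abs_of_nonneg hgn]
          rw [e4]
          nlinarith [mul_le_mul_of_nonneg_right key2 hgn]
        have h3 : (∫ x in (0:ℝ)..1, ((1/2)*((x-t)^(2*m) * g x) + (1/2)*((x-t)^(2*m+2) * g x)))
            = (1/2)*J0 + (1/2)*J2 := by
          rw [integral_add ((continuous_const.fun_mul (hJc (2*m))).intervalIntegrable 0 1)
            ((continuous_const.fun_mul (hJc (2*m+2))).intervalIntegrable 0 1),
            intervalIntegral.integral_const_mul, intervalIntegral.integral_const_mul, hJ0, hJ2]
        linarith
      -- combine: N * J2 ≤ (m+1) * J0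
      have hJ0nn : 0 ≤ J0 := hJnn m
      have hJ2nn : 0 ≤ J2 := by
        have h := hJnn (m+1)
        rw [show 2*(m+1) = 2*m+2 from by ring] at h
        rw [hJ2]; exact h
      have hdJ1 : d*J1 ≤ (1/2)*J0 + (1/2)*J2 := by
        calc d*J1 ≤ |d*J1| := le_abs_self _
          _ = |d| * |J1| := abs_mul _ _
          _ ≤ 1 * |J1| := mul_le_mul_of_nonneg_right hd (abs_nonneg _)
          _ = |J1| := one_mul _
          _ ≤ _ := hJ1b
      have hcomb : N * J2 ≤ ((m:ℝ)+1) * J0 := by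
        have hK4 : (2*(m:ℝ)+1) * K ≤ (2*(m:ℝ)+1) * (1/4 * J0) :=
          mul_le_mul_of_nonneg_left hKb (by positivity)
        have hm0 : (0:ℝ) ≤ (m:ℝ)*J0 := mul_nonneg (Nat.cast_nonneg m) hJ0nn
        clear_value N d J0 J1 J2 K
        linarith
      -- conclude
      have e5 : 2*(m+1) = 2*m+2 := by ring
      rw [e5, ← hJ2]
      have h5 : c * J2 ≤ ((m:ℝ)+1) * (c * J0) / N := by
        rw [le_div_iff₀ hN0]
        nlinarith [mul_le_mul_of_nonneg_left hcomb hc0.le]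
      have h6 : ((m:ℝ)+1) * (c * J0) / N ≤ ((m:ℝ)+1) * ((m.factorial : ℝ)/N^m) / N := by
        gcongr
      have h7 : ((m:ℝ)+1) * ((m.factorial : ℝ)/N^m) / N = ((m+1).factorial : ℝ)/N^(m+1) := by
        rw [Nat.factorial_succ]
        push_cast
        field_simp
        ring
      linarith


/-- pointwise splitting inequality -/
lemma rpow_split {u ε a : ℝ} (k : ℕ) (hu : 0 ≤ u) (hε : 0 < ε) (ha : 0 < a)
    (hak : a ≤ 2*k) : u ^ a ≤ ε ^ a + ε ^ (a - 2*k) * u ^ (2*k) := by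
  rcases le_total u ε with h | h
  · have h1 : u ^ a ≤ ε ^ a := Real.rpow_le_rpow hu h ha.le
    have h2 : 0 ≤ ε ^ (a - 2*k) * u^(2*k) :=
      mul_nonneg (Real.rpow_pos_of_pos hε _).le (pow_nonneg hu _)
    linarith
  · have hu0 : 0 < u := lt_of_lt_of_le hε h
    have e : u ^ a = u ^ (a - 2*(k:ℝ)) * u^(2*k) := by
      rw [← Real.rpow_natCast u (2*k), ← Real.rpow_add hu0]
      congr 1; push_cast; ring
    rw [e]
    have h3 : u ^ (a-2*(k:ℝ)) ≤ ε ^ (a-2*(k:ℝ)) :=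
      Real.rpow_le_rpow_of_nonpos hε h (by linarith)
    have h4 : (0:ℝ) ≤ ε ^ a := (Real.rpow_pos_of_pos hε _).le
    have := mul_le_mul_of_nonneg_right h3 (pow_nonneg hu0.le (2*k))
    linarith

theorem stmt7 (a : ℝ) (ha : 0 < a) :
    ∃ C > 0, ∃ N : ℕ, ∀ n : ℕ, N ≤ n →
      (∑ i ∈ Finset.Icc 1 n, (i : ℝ) * (n.choose i : ℝ) *
          ∫ x in (0:ℝ)..1,
            |x - (2 * (i : ℝ) - 1) / (2 * n)| ^ a * x ^ (i - 1) * (1 - x) ^ (n - i))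
        ≤ C * (n : ℝ) ^ ((1 : ℝ) - a / 2) := by
  set k : ℕ := ⌈a/2⌉₊ with hk
  have hak : a ≤ 2*k := by
    have := Nat.le_ceil (a/2)
    rw [← hk] at this
    linarith
  refine ⟨(k.factorial : ℝ) + 1, by positivity, 1, ?_⟩
  intro n hn
  have hn0 : (0:ℝ) < n := by exact_mod_cast hn
  have hterm : ∀ i ∈ Finset.Icc 1 n,
      (i : ℝ) * (n.choose i : ℝ) *
          ∫ x in (0:ℝ)..1,
            |x - (2 * (i : ℝ) - 1) / (2 * n)| ^ a * x ^ (i - 1) * (1 - x) ^ (n - i)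
        ≤ ((k.factorial : ℝ) + 1) * (n:ℝ) ^ (-(a/2)) := by
    intro i hi
    rw [Finset.mem_Icc] at hi
    obtain ⟨hi1, hin⟩ := hi
    obtain ⟨j, rfl⟩ : ∃ j, i = j+1 := ⟨i-1, by omega⟩
    obtain ⟨r, hnr⟩ : ∃ r, n = j+r+1 := ⟨n-(j+1), by omega⟩
    subst hnr
    rw [show (j+1) - 1 = j from rfl, show j+r+1-(j+1) = r from by omega]
    push_cast
    set Nn : ℝ := (j:ℝ)+(r:ℝ)+1 with hNn
    have hNpos : (0:ℝ) < Nn := by positivity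
    set t : ℝ := (2 * ((j:ℝ)+1) - 1) / (2 * Nn) with ht
    set c : ℝ := ((j+r+1).factorial : ℝ) / (j.factorial * r.factorial) with hc
    have hc0 : 0 < c := by rw [hc]; positivity
    have hcc : ((j:ℝ)+1) * ((j+r+1).choose (j+1) : ℝ) = c := by
      have h := Nat.choose_mul_factorial_mul_factorial
        (show j+1 ≤ j+r+1 by omega)
      rw [show (j+r+1)-(j+1) = r from by omega] at h
      rw [hc, eq_div_iff (by positivity)]
      have hnat : ((j+1:ℕ)) * ((j+r+1).choose (j+1)) * (j.factorial * r.factorial)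
          = (j+r+1).factorial := by
        rw [← h, Nat.factorial_succ]; ring
      exact_mod_cast hnat
    have hd : |((j:ℝ)+1) - ((j:ℝ)+(r:ℝ)+2)*t| ≤ 1 := by
      have e : ((j:ℝ)+1) - ((j:ℝ)+(r:ℝ)+2)*t = ((r:ℝ)-(j:ℝ))/(2*Nn) := by
        rw [ht, hNn]; field_simp; ring
      rw [e, abs_div, abs_of_pos (by positivity : (0:ℝ) < 2*Nn),
        div_le_one (by positivity)]
      have h1 : (0:ℝ) ≤ (j:ℝ) := Nat.cast_nonneg j
      have h2 : (0:ℝ) ≤ (r:ℝ) := Nat.cast_nonneg r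
      rw [abs_le]; constructor <;> (rw [hNn]; try rw [hNn]) <;> linarith [hNn]
    -- continuity
    have hgc : Continuous (fun x : ℝ => x^j*(1-x)^r) := by continuity
    have hfc : Continuous (fun x : ℝ => |x - t| ^ a * (x^j*(1-x)^r)) := by
      apply Continuous.mul _ hgc
      exact ((continuous_id.sub continuous_const).abs).rpow_const
        (fun x => Or.inr ha.le)
    set ε : ℝ := Nn ^ (-(1/2) : ℝ) with hε
    have hε0 : 0 < ε := Real.rpow_pos_of_pos hNpos _
    have hrc : Continuous (fun x : ℝ =>
        (ε^a + ε^(a-2*(k:ℝ)) * (x-t)^(2*k)) * (x^j*(1-x)^r)) := by continuity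
    -- rewrite integrand association
    have hassoc : (∫ x in (0:ℝ)..1, |x - t|^a * x^j * (1-x)^r)
        = ∫ x in (0:ℝ)..1, |x - t|^a * (x^j*(1-x)^r) :=
      integral_congr (fun x _ => by ring)
    rw [hassoc, hcc]
    -- monotone step
    have hmono : (∫ x in (0:ℝ)..1, |x - t|^a * (x^j*(1-x)^r))
        ≤ ∫ x in (0:ℝ)..1, (ε^a + ε^(a-2*(k:ℝ)) * (x-t)^(2*k)) * (x^j*(1-x)^r) := by
      apply intervalIntegral.integral_mono_on (by norm_num)
        (hfc.intervalIntegrable 0 1) (hrc.intervalIntegrable 0 1)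
      intro x hx
      have hgn : 0 ≤ x^j*(1-x)^r := by
        have h0 := hx.1; have h1 := hx.2
        have : (0:ℝ) ≤ 1 - x := by linarith
        positivity
      have hsp := rpow_split k (abs_nonneg (x-t)) hε0 ha hak
      have habs2 : |x-t|^(2*k) = (x-t)^(2*k) := by
        rw [pow_mul, sq_abs, ← pow_mul]
      rw [habs2] at hsp
      exact mul_le_mul_of_nonneg_right hsp hgn
    -- evaluate the RHS integral
    have hsplit : (∫ x in (0:ℝ)..1, (ε^a + ε^(a-2*(k:ℝ)) * (x-t)^(2*k)) * (x^j*(1-x)^r))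
        = ε^a * (∫ x in (0:ℝ)..1, x^j*(1-x)^r)
          + ε^(a-2*(k:ℝ)) * ∫ x in (0:ℝ)..1, (x-t)^(2*k) * (x^j*(1-x)^r) := by
      rw [← intervalIntegral.integral_const_mul, ← intervalIntegral.integral_const_mul,
        ← integral_add ((continuous_const.fun_mul hgc).intervalIntegrable 0 1)
          ((continuous_const.fun_mul (by continuity : Continuous (fun x:ℝ => (x-t)^(2*k) * (x^j*(1-x)^r)))).intervalIntegrable 0 1)]
      apply integral_congr
      intro x _
      ring
    have hbeta : c * (∫ x in (0:ℝ)..1, x^j*(1-x)^r) = 1 := by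
      rw [beta_val, hc]
      have h1 : ((j+r+1).factorial : ℝ) ≠ 0 := by positivity
      have h2 : (j.factorial : ℝ) ≠ 0 := by positivity
      have h3 : (r.factorial : ℝ) ≠ 0 := by positivity
      field_simp
    have hmom := moment_bound j r t hd k
    rw [← hc, ← hNn] at hmom
    -- put it together
    have hb0 : (0:ℝ) ≤ ∫ x in (0:ℝ)..1, x^j*(1-x)^r := by
      apply intervalIntegral.integral_nonneg (by norm_num)
      intro x hx
      have h0 := hx.1; have h1 := hx.2
      have : (0:ℝ) ≤ 1 - x := by linarith
      positivity
    have hεa : ε^a = Nn ^ (-(a/2)) := by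
      rw [hε, ← Real.rpow_mul hNpos.le]
      congr 1; ring
    have hεb : ε^(a-2*(k:ℝ)) = Nn^(k:ℕ) * Nn^(-(a/2)) := by
      rw [hε, ← Real.rpow_mul hNpos.le, ← Real.rpow_natCast Nn k, ← Real.rpow_add hNpos]
      congr 1; ring
    have hεbnn : (0:ℝ) ≤ ε^(a-2*(k:ℝ)) := (Real.rpow_pos_of_pos hε0 _).le
    have hNk : (0:ℝ) < Nn^k := by positivity
    calc c * ∫ x in (0:ℝ)..1, |x - t|^a * (x^j*(1-x)^r)
        ≤ c * ∫ x in (0:ℝ)..1, (ε^a + ε^(a-2*(k:ℝ)) * (x-t)^(2*k)) * (x^j*(1-x)^r) :=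
          mul_le_mul_of_nonneg_left hmono hc0.le
      _ = ε^a * (c * ∫ x in (0:ℝ)..1, x^j*(1-x)^r)
          + ε^(a-2*(k:ℝ)) * (c * ∫ x in (0:ℝ)..1, (x-t)^(2*k) * (x^j*(1-x)^r)) := by
          rw [hsplit]; ring
      _ ≤ ε^a * 1 + ε^(a-2*(k:ℝ)) * ((k.factorial:ℝ)/Nn^k) := by
          rw [hbeta]
          have := mul_le_mul_of_nonneg_left hmom hεbnn
          linarith
      _ = Nn^(-(a/2)) + (k.factorial:ℝ) * Nn^(-(a/2)) := by
          rw [hεa, hεb, mul_one]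
          field_simp
      _ = ((k.factorial:ℝ) + 1) * Nn^(-(a/2)) := by ring
  calc (∑ i ∈ Finset.Icc 1 n, (i : ℝ) * (n.choose i : ℝ) *
          ∫ x in (0:ℝ)..1,
            |x - (2 * (i : ℝ) - 1) / (2 * n)| ^ a * x ^ (i - 1) * (1 - x) ^ (n - i))
      ≤ ∑ i ∈ Finset.Icc 1 n, ((k.factorial : ℝ) + 1) * (n:ℝ) ^ (-(a/2)) :=
        Finset.sum_le_sum hterm
    _ = (n:ℝ) * (((k.factorial : ℝ) + 1) * (n:ℝ) ^ (-(a/2))) := by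
        rw [Finset.sum_const, Nat.card_Icc, nsmul_eq_mul]
        congr 1
    _ = ((k.factorial : ℝ) + 1) * (n : ℝ) ^ ((1 : ℝ) - a / 2) := by
        have h2 : (n:ℝ)^((1:ℝ)-a/2) = (n:ℝ)^(1:ℝ) * (n:ℝ)^(-(a/2)) := by
          rw [← Real.rpow_add hn0]; congr 1
        rw [h2, Real.rpow_one]; ring
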